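/- arXiv:2007.15478 — 3 statements merged into one kernel-verified Lean document; each statement's English description precedes it below -/
import Mathlib

section
/- Let E be a regular-oriented word equation L = R. Then the control structure of the counter system CA(E) is flat (every control state lies on at most one simple cycle); moreover every simple cycle in CA(E) is 1-variable-reducing, i.e., there is a single variable y such that every transition on the cycle is a (P2)/(P3)/(P4) step whose counter update is DEC_y or SUB_{y,z} for some z ≠ y; and the length of every simple cycle is at most max(|L|, |R|) − 1. -/
namespace WordEq

variable {A V : Type*}

/-- A word over the alphabet of constants `A` and variables `V`. -/
abbrev Word (A V : Type*) := List (A ⊕ V)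

/-- A word equation `L = R`, given as the pair `(L, R)`. -/
abbrev Equation (A V : Type*) := Word A V × Word A V

/-- Substitute the word `r` for every occurrence of the variable `x` in `w`. -/
def substVar [DecidableEq V] (x : V) (r : Word A V) (w : Word A V) : Word A V :=
  w.flatMap fun s =>
    match s with
    | Sum.inl a => [Sum.inl a]
    | Sum.inr y => if y = x then r else [Sum.inr y]

/-- The number of occurrences of the variable `x` in the equation `E`
(counting both sides). -/
def varCount [DecidableEq A] [DecidableEq V] (E : Equation A V) (x : V) : ℕ :=
  (E.1 ++ E.2).count (Sum.inr x)

/-- An equation is quadratic if every variable occurs at most twice. -/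
def Quadratic [DecidableEq A] [DecidableEq V] (E : Equation A V) : Prop :=
  ∀ x : V, varCount E x ≤ 2

/-- Apply a substitution (a map from variables to constant words) to a word,
i.e. the unique monoid homomorphism `(A ∪ V)* → A*` extending `σ` and fixing
every constant. -/
def applySub (σ : V → List A) (w : Word A V) : List A :=
  w.flatMap fun s =>
    match s with
    | Sum.inl a => [a]
    | Sum.inr x => σ x

/-- `σ` is a solution of the word equation `E`. -/
def IsSolution (σ : V → List A) (E : Equation A V) : Prop :=
  applySub σ E.1 = applySub σ E.2

/-- The length `|E| = |L| + |R|` of a word equation. -/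
def eqLen (E : Equation A V) : ℕ := E.1.length + E.2.length

/-- The Nielsen transformation (Levi's method) rewriting relation on word
equations.  The rules `p1`–`p4` remove a nonempty prefix from an equation
`α·w₁ = β·w₂`; the rules `eraseL`/`eraseR` erase a variable that is guessed to
denote the empty word (substituting `ε` for it everywhere). -/
inductive Nielsen [DecidableEq V] : Equation A V → Equation A V → Prop
  | eraseL (x : V) (w₁ w₂ : Word A V) :
      Nielsen (Sum.inr x :: w₁, w₂) (substVar x [] w₁, substVar x [] w₂)
  | eraseR (w₁ : Word A V) (x : V) (w₂ : Word A V) :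
      Nielsen (w₁, Sum.inr x :: w₂) (substVar x [] w₁, substVar x [] w₂)
  | p1 (α : A ⊕ V) (w₁ w₂ : Word A V) :
      Nielsen (α :: w₁, α :: w₂) (w₁, w₂)
  | p2 (a : A) (y : V) (w₁ w₂ : Word A V) :
      Nielsen (Sum.inl a :: w₁, Sum.inr y :: w₂)
        (substVar y [Sum.inl a, Sum.inr y] w₁,
          Sum.inr y :: substVar y [Sum.inl a, Sum.inr y] w₂)
  | p3 (x : V) (a : A) (w₁ w₂ : Word A V) :
      Nielsen (Sum.inr x :: w₁, Sum.inl a :: w₂)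
        (Sum.inr x :: substVar x [Sum.inl a, Sum.inr x] w₁,
          substVar x [Sum.inl a, Sum.inr x] w₂)
  | p4L (x y : V) (hxy : x ≠ y) (w₁ w₂ : Word A V) :
      Nielsen (Sum.inr x :: w₁, Sum.inr y :: w₂)
        (substVar y [Sum.inr x, Sum.inr y] w₁,
          Sum.inr y :: substVar y [Sum.inr x, Sum.inr y] w₂)
  | p4R (x y : V) (hxy : x ≠ y) (w₁ w₂ : Word A V) :
      Nielsen (Sum.inr x :: w₁, Sum.inr y :: w₂)
        (Sum.inr x :: substVar x [Sum.inr y, Sum.inr x] w₁,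
          substVar x [Sum.inr y, Sum.inr x] w₂)

/-- The transition relation of the counter system `CA(E)` associated with a
word equation: configurations are pairs of an equation (a control state) and a
valuation of the counters (one counter per variable, standing for the length
of that variable).  Each Nielsen step induces a transition with the
corresponding Presburger guard/update on the counters. -/
inductive CStep [DecidableEq V] :
    Equation A V × (V → ℕ) → Equation A V × (V → ℕ) → Prop
  | eraseL (x : V) (w₁ w₂ : Word A V) (v : V → ℕ) (hx : v x = 0) :
      CStep ((Sum.inr x :: w₁, w₂), v) ((substVar x [] w₁, substVar x [] w₂), v)
  | eraseR (w₁ : Word A V) (x : V) (w₂ : Word A V) (v : V → ℕ) (hx : v x = 0) :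
      CStep ((w₁, Sum.inr x :: w₂), v) ((substVar x [] w₁, substVar x [] w₂), v)
  | p1 (α : A ⊕ V) (w₁ w₂ : Word A V) (v : V → ℕ) :
      CStep ((α :: w₁, α :: w₂), v) ((w₁, w₂), v)
  | p2 (a : A) (y : V) (w₁ w₂ : Word A V) (v : V → ℕ) (hy : 0 < v y) :
      CStep ((Sum.inl a :: w₁, Sum.inr y :: w₂), v)
        ((substVar y [Sum.inl a, Sum.inr y] w₁,
          Sum.inr y :: substVar y [Sum.inl a, Sum.inr y] w₂),
          Function.update v y (v y - 1))
  | p3 (x : V) (a : A) (w₁ w₂ : Word A V) (v : V → ℕ) (hx : 0 < v x) :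
      CStep ((Sum.inr x :: w₁, Sum.inl a :: w₂), v)
        ((Sum.inr x :: substVar x [Sum.inl a, Sum.inr x] w₁,
          substVar x [Sum.inl a, Sum.inr x] w₂),
          Function.update v x (v x - 1))
  | p4L (x y : V) (hxy : x ≠ y) (w₁ w₂ : Word A V) (v : V → ℕ)
      (h₁ : 0 < v x) (h₂ : v x ≤ v y) :
      CStep ((Sum.inr x :: w₁, Sum.inr y :: w₂), v)
        ((substVar y [Sum.inr x, Sum.inr y] w₁,
          Sum.inr y :: substVar y [Sum.inr x, Sum.inr y] w₂),
          Function.update v y (v y - v x))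
  | p4R (x y : V) (hxy : x ≠ y) (w₁ w₂ : Word A V) (v : V → ℕ)
      (h₁ : 0 < v y) (h₂ : v y ≤ v x) :
      CStep ((Sum.inr x :: w₁, Sum.inr y :: w₂), v)
        ((Sum.inr x :: substVar x [Sum.inr y, Sum.inr x] w₁,
          substVar x [Sum.inr y, Sum.inr x] w₂),
          Function.update v x (v x - v y))

/-- A word equation is regular if each variable occurs at most once on each
side. -/
def Regular [DecidableEq A] [DecidableEq V] (E : Equation A V) : Prop :=
  ∀ x : V, E.1.count (Sum.inr x) ≤ 1 ∧ E.2.count (Sum.inr x) ≤ 1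

/-- On the word `w`, the variables occur in `lt`-increasing order. -/
def SideOrdered (lt : V → V → Prop) (w : Word A V) : Prop :=
  ∀ (w₁ w₂ w₃ : Word A V) (α β : V),
    w = w₁ ++ Sum.inr α :: w₂ ++ Sum.inr β :: w₃ → lt α β

/-- A word equation is oriented if there is a strict total order on the
variables such that on each side the variables occur in increasing order. -/
def Oriented (E : Equation A V) : Prop :=
  ∃ lt : V → V → Prop,
    IsStrictTotalOrder V lt ∧ SideOrdered lt E.1 ∧ SideOrdered lt E.2

/-- A regular-oriented word equation. -/
def RegularOriented [DecidableEq A] [DecidableEq V] (E : Equation A V) : Prop :=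
  Regular E ∧ Oriented E

/-- A simple cycle in the control structure of the counter system `CA(E)`:
a nonempty list of pairwise distinct control states (equations reachable from
`E`), each of which has a Nielsen transition to the cyclically next one. -/
def IsSimpleCycle [DecidableEq V] (E : Equation A V)
    (l : List (Equation A V)) : Prop :=
  l ≠ [] ∧ l.Nodup ∧ (∀ s ∈ l, Relation.ReflTransGen Nielsen E s) ∧
    ∀ i : Fin l.length,
      Nielsen (l.get i) (l.get ⟨((i : ℕ) + 1) % l.length, Nat.mod_lt _ i.pos⟩)

/-! ### Auxiliary machinery -/

section Aux

open List

variable [DecidableEq A] [DecidableEq V]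

instance sumLawfulBEq : LawfulBEq (A ⊕ V) where
  eq_of_beq {a b} h := by
    cases a <;> cases b <;> first
      | (simp only [Sum.inl.injEq, Sum.inr.injEq]; exact eq_of_beq (by exact h))
      | (exact Bool.noConfusion (by exact h : false = true))
  rfl {a} := by
    cases a with
    | inl a => exact beq_self_eq_true a
    | inr v => exact beq_self_eq_true v

omit [DecidableEq A] in
lemma substVar_cons_inl (x : V) (r : Word A V) (a : A) (w : Word A V) :
    substVar x r (Sum.inl a :: w) = Sum.inl a :: substVar x r w := by
  simp [substVar]

omit [DecidableEq A] in
lemma substVar_cons_inr_eq (x : V) (r : Word A V) (w : Word A V) :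
    substVar x r (Sum.inr x :: w) = r ++ substVar x r w := by
  simp [substVar]

omit [DecidableEq A] in
lemma substVar_cons_inr_ne (x : V) (r : Word A V) {z : V} (h : z ≠ x) (w : Word A V) :
    substVar x r (Sum.inr z :: w) = Sum.inr z :: substVar x r w := by
  simp [substVar, h]

omit [DecidableEq A] in
lemma substVar_append (x : V) (r : Word A V) (w₁ w₂ : Word A V) :
    substVar x r (w₁ ++ w₂) = substVar x r w₁ ++ substVar x r w₂ := by
  simp [substVar]

omit [DecidableEq A] in
lemma substVar_of_not_mem {x : V} {w : Word A V} (h : Sum.inr x ∉ w) (r : Word A V) :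
    substVar x r w = w := by
  induction w with
  | nil => rfl
  | cons c w ih =>
    simp only [mem_cons, not_or] at h
    rcases c with a | z
    · rw [substVar_cons_inl, ih h.2]
    · have hz : z ≠ x := fun he => h.1 (by rw [he])
      rw [substVar_cons_inr_ne _ _ hz, ih h.2]

omit [DecidableEq A] in
lemma substVar_nil_sublist (x : V) (w : Word A V) : substVar x [] w <+ w := by
  induction w with
  | nil => simp [substVar]
  | cons c w ih =>
    rcases c with a | z
    · rw [substVar_cons_inl]; exact ih.cons₂ _
    · by_cases hz : z = x
      · subst hz; rw [substVar_cons_inr_eq]; exact ih.cons _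
      · rw [substVar_cons_inr_ne _ _ hz]; exact ih.cons₂ _

lemma count_cons'' (a b : A ⊕ V) (l : Word A V) :
    count a (b :: l) = count a l + if a = b then 1 else 0 := by
  by_cases h : a = b
  · subst h; simp
  · rw [if_neg h, List.count_cons_of_ne (Ne.symm h), Nat.add_zero]

lemma length_substVar_pair (x : V) (σ : A ⊕ V) (w : Word A V) :
    (substVar x [σ, Sum.inr x] w).length = w.length + count (Sum.inr x) w := by
  induction w with
  | nil => simp [substVar]
  | cons c w ih =>
    rcases c with a | z
    · rw [substVar_cons_inl]
      simp only [length_cons, count_cons'', ih]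
      split_ifs <;> first | omega | simp_all
    · by_cases hz : z = x
      · subst hz
        rw [substVar_cons_inr_eq]
        simp only [length_append, length_cons, count_cons'', ih, if_pos rfl]
        simp [substVar]
        omega
      · rw [substVar_cons_inr_ne _ _ hz]
        simp only [length_cons, count_cons'', ih]
        split_ifs <;> first | omega | simp_all

lemma count_substVar_pair (x : V) (σ : A ⊕ V) (hσ : σ ≠ Sum.inr x) (c : A ⊕ V)
    (w : Word A V) :
    count c (substVar x [σ, Sum.inr x] w) =
      count c w + if c = σ then count (Sum.inr x) w else 0 := by
  induction w with
  | nil => simp [substVar]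
  | cons d w ih =>
    rcases d with a | z
    · rw [substVar_cons_inl]
      simp only [count_cons'', ih]
      split_ifs <;> simp_all <;> omega
    · by_cases hz : z = x
      · subst hz
        rw [substVar_cons_inr_eq]
        simp only [List.cons_append, List.nil_append]
        simp only [count_cons'', ih]
        split_ifs <;> simp_all <;> omega
      · rw [substVar_cons_inr_ne _ _ hz]
        simp only [count_cons'', ih]
        split_ifs <;> simp_all <;> omega

omit [DecidableEq A] [DecidableEq V] in
lemma unique_split {y : A ⊕ V} :
    ∀ {p p' s s' : Word A V}, p ++ y :: s = p' ++ y :: s' → y ∉ p → y ∉ p' →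
      p = p' ∧ s = s' := by
  intro p
  induction p with
  | nil =>
    intro p' s s' h hp hp'
    cases p' with
    | nil => simp_all
    | cons c q =>
      simp only [nil_append, cons_append, List.cons.injEq] at h
      exact absurd (by rw [← h.1]; exact mem_cons_self) hp'
  | cons c q ih =>
    intro p' s s' h hp hp'
    cases p' with
    | nil =>
      simp only [nil_append, cons_append, List.cons.injEq] at h
      exact absurd (by rw [h.1]; exact mem_cons_self) hp
    | cons c' q' =>
      simp only [cons_append, List.cons.injEq] at h
      obtain ⟨rfl, h2⟩ := h
      obtain ⟨rfl, rfl⟩ := ih h2 (fun hm => hp (mem_cons_of_mem _ hm))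
        (fun hm => hp' (mem_cons_of_mem _ hm))
      exact ⟨rfl, rfl⟩

lemma exists_split_of_count_one {w : Word A V} {y : V}
    (h : count (Sum.inr y) w = 1) :
    ∃ p s, w = p ++ Sum.inr y :: s ∧ Sum.inr y ∉ p ∧ Sum.inr y ∉ s := by
  have hmem : Sum.inr y ∈ w := List.count_pos_iff.mp (by omega)
  obtain ⟨p, s, rfl⟩ := List.append_of_mem hmem
  refine ⟨p, s, rfl, ?_, ?_⟩
  · intro hm
    have : 2 ≤ count (Sum.inr y) (p ++ Sum.inr y :: s) := by
      rw [count_append, count_cons_self]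
      have := List.count_pos_iff.mpr hm
      omega
    omega
  · intro hm
    have : 2 ≤ count (Sum.inr y) (p ++ Sum.inr y :: s) := by
      rw [count_append, count_cons_self]
      have := List.count_pos_iff.mpr hm
      omega
    omega

omit [DecidableEq A] in
lemma substVar_split {y : V} {p s : Word A V} (σ : A ⊕ V)
    (hp : Sum.inr y ∉ p) (hs : Sum.inr y ∉ s) :
    substVar y [σ, Sum.inr y] (p ++ Sum.inr y :: s) = p ++ σ :: Sum.inr y :: s := by
  rw [substVar_append, substVar_of_not_mem hp, substVar_cons_inr_eq,
    substVar_of_not_mem hs]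
  rfl

/-- Swap the two sides of an equation. -/
def sw (E : Equation A V) : Equation A V := (E.2, E.1)

/-- A conflict: a pair of variables occurring in opposite orders on the two
sides. -/
def Confl (E : Equation A V) : Prop :=
  ∃ u v : V, [Sum.inr u, Sum.inr v] <+ E.1 ∧ [Sum.inr v, Sum.inr u] <+ E.2

/-- The invariant: regular and conflict-free. -/
def Good (E : Equation A V) : Prop := Regular E ∧ ¬ Confl E

omit [DecidableEq A] [DecidableEq V] in
lemma confl_sw {E : Equation A V} (h : Confl (sw E)) : Confl E := by
  obtain ⟨u, v, h1, h2⟩ := h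
  exact ⟨v, u, h2, h1⟩

lemma regular_sw {E : Equation A V} (h : Regular E) : Regular (sw E) :=
  fun x => ⟨(h x).2, (h x).1⟩

lemma good_sw {E : Equation A V} (h : Good E) : Good (sw E) :=
  ⟨regular_sw h.1, fun hc => h.2 (confl_sw hc)⟩

omit [DecidableEq A] [DecidableEq V] in
lemma pair_sublist_split {a b : A ⊕ V} {w : Word A V} (h : [a, b] <+ w) :
    ∃ w₁ w₂ w₃, w = w₁ ++ a :: w₂ ++ b :: w₃ := by
  induction w with
  | nil => simp at h
  | cons c w ih =>
    rcases h with _ | ⟨_, h⟩ | ⟨_, h⟩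
    · obtain ⟨w₁, w₂, w₃, rfl⟩ := ih ‹_›
      exact ⟨c :: w₁, w₂, w₃, rfl⟩
    · obtain ⟨w₂, w₃, rfl⟩ := List.append_of_mem (List.singleton_sublist.mp ‹_›)
      exact ⟨[], w₂, w₃, rfl⟩

lemma good_of_regularOriented {E : Equation A V} (h : RegularOriented E) : Good E := by
  refine ⟨h.1, ?_⟩
  rintro ⟨u, v, h1, h2⟩
  obtain ⟨lt, hsto, hL, hR⟩ := h.2
  obtain ⟨w₁, w₂, w₃, he₁⟩ := pair_sublist_split h1
  obtain ⟨u₁, u₂, u₃, he₂⟩ := pair_sublist_split h2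
  have huv : lt u v := hL w₁ w₂ w₃ u v (by simpa using he₁)
  have hvu : lt v u := hR u₁ u₂ u₃ v u (by simpa using he₂)
  haveI := hsto
  exact absurd (_root_.trans huv hvu) (irrefl u)

omit [DecidableEq A] in
lemma nielsen_sw {s t : Equation A V} (h : Nielsen s t) : Nielsen (sw s) (sw t) := by
  cases h with
  | eraseL x w₁ w₂ => exact Nielsen.eraseR _ x _
  | eraseR w₁ x w₂ => exact Nielsen.eraseL x _ _
  | p1 α w₁ w₂ => exact Nielsen.p1 α w₂ w₁
  | p2 a y w₁ w₂ => exact Nielsen.p3 y a w₂ w₁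
  | p3 x a w₁ w₂ => exact Nielsen.p2 a x w₂ w₁
  | p4L x y hxy w₁ w₂ => exact Nielsen.p4R y x hxy.symm w₂ w₁
  | p4R x y hxy w₁ w₂ => exact Nielsen.p4L y x hxy.symm w₂ w₁

omit [DecidableEq A] in
lemma cstep_sw {s t : Equation A V} {v v' : V → ℕ}
    (h : CStep (s, v) (t, v')) : CStep ((sw s, v) : Equation A V × (V → ℕ)) (sw t, v') := by
  cases h with
  | eraseL x w₁ w₂ v hx => exact CStep.eraseR _ x _ _ hx
  | eraseR w₁ x w₂ v hx => exact CStep.eraseL x _ _ _ hx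
  | p1 α w₁ w₂ v => exact CStep.p1 α w₂ w₁ v
  | p2 a y w₁ w₂ v hy => exact CStep.p3 y a w₂ w₁ v hy
  | p3 x a w₁ w₂ v hx => exact CStep.p2 a x w₂ w₁ v hx
  | p4L x y hxy w₁ w₂ v h₁ h₂ => exact CStep.p4R y x hxy.symm w₂ w₁ v h₁ h₂
  | p4R x y hxy w₁ w₂ v h₁ h₂ => exact CStep.p4L y x hxy.symm w₂ w₁ v h₁ h₂

/-! Preservation of the invariant by the individual Nielsen rules. -/

lemma count_side_le {x : V} {c : A ⊕ V} {w w' : Word A V} (h : w' <+ w) :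
    count c w' ≤ count c w := h.count_le c

lemma good_erase {x : V} {w₁ w₂ : Word A V} {s : Equation A V}
    (hg : Good s) (h1 : w₁ <+ s.1) (h2 : w₂ <+ s.2) :
    Good (substVar x [] w₁, substVar x [] w₂) := by
  have s1 : substVar x [] w₁ <+ s.1 := (substVar_nil_sublist x w₁).trans h1
  have s2 : substVar x [] w₂ <+ s.2 := (substVar_nil_sublist x w₂).trans h2
  constructor
  · intro z
    exact ⟨le_trans (s1.count_le _) (hg.1 z).1, le_trans (s2.count_le _) (hg.1 z).2⟩
  · rintro ⟨u, v, h1', h2'⟩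
    exact hg.2 ⟨u, v, h1'.trans s1, h2'.trans s2⟩

omit [DecidableEq A] in
lemma filter_isRight_substVar_const (y : V) (a : A) (w : Word A V) :
    (substVar y [Sum.inl a, Sum.inr y] w).filter Sum.isRight = w.filter Sum.isRight := by
  induction w with
  | nil => rfl
  | cons c w ih =>
    rcases c with b | z
    · rw [substVar_cons_inl]; simp [ih]
    · by_cases hz : z = y
      · subst hz; rw [substVar_cons_inr_eq]; simp [ih, List.filter_cons]
      · rw [substVar_cons_inr_ne _ _ hz]; simp [ih, List.filter_cons]

omit [DecidableEq A] in
lemma pair_sublist_substVar_const {u v y : V} {a : A} {w : Word A V}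
    (h : [Sum.inr u, Sum.inr v] <+ substVar y [Sum.inl a, Sum.inr y] w) :
    [Sum.inr u, Sum.inr v] <+ w := by
  have := h.filter Sum.isRight
  rw [filter_isRight_substVar_const] at this
  simp only [List.filter_cons, Sum.isRight, List.filter_nil] at this
  exact (by simpa using this : [Sum.inr u, Sum.inr v] <+ w.filter Sum.isRight).trans
    (List.filter_sublist)

/-- `p2`: substituting `a·y` preserves the invariant. -/
lemma good_p2 {a : A} {y : V} {w₁ w₂ : Word A V}
    (hg : Good (Sum.inl a :: w₁, Sum.inr y :: w₂)) :
    Good (substVar y [Sum.inl a, Sum.inr y] w₁,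
      Sum.inr y :: substVar y [Sum.inl a, Sum.inr y] w₂) := by
  have hw₂ : Sum.inr y ∉ w₂ := by
    intro hm
    have h1 := (hg.1 y).2
    simp only [count_cons_self] at h1
    have := List.count_pos_iff.mpr hm
    omega
  rw [substVar_of_not_mem hw₂]
  constructor
  · intro z
    constructor
    · rw [count_substVar_pair _ _ (by simp) _ w₁]
      have := (hg.1 z).1
      rw [count_cons'' ] at this
      simp only [if_neg (by simp : (Sum.inr z : A ⊕ V) ≠ Sum.inl a)]
      omega
    · exact (hg.1 z).2
  · rintro ⟨u, v, h1, h2⟩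
    exact hg.2 ⟨u, v, (pair_sublist_substVar_const h1).cons _, h2⟩

/-- `p4L`: substituting `x·y` preserves the invariant. -/
lemma good_p4L {x y : V} (hxy : x ≠ y) {w₁ w₂ : Word A V}
    (hg : Good (Sum.inr x :: w₁, Sum.inr y :: w₂)) :
    Good (substVar y [Sum.inr x, Sum.inr y] w₁,
      Sum.inr y :: substVar y [Sum.inr x, Sum.inr y] w₂) := by
  have hyw₂ : Sum.inr y ∉ w₂ := by
    intro hm
    have h1 := (hg.1 y).2
    simp only [count_cons_self] at h1
    have := List.count_pos_iff.mpr hm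
    omega
  have hxw₁ : Sum.inr x ∉ w₁ := by
    intro hm
    have h1 := (hg.1 x).1
    simp only [count_cons_self] at h1
    have := List.count_pos_iff.mpr hm
    omega
  have hxy' : (Sum.inr x : A ⊕ V) ≠ Sum.inr y := by simp [hxy]
  rw [substVar_of_not_mem hyw₂]
  constructor
  · -- regularity
    intro z
    constructor
    · rw [count_substVar_pair _ _ hxy' _ w₁]
      have hz1 := (hg.1 z).1
      rw [count_cons''] at hz1
      have hy1 := (hg.1 y).1
      rw [count_cons''] at hy1
      by_cases hzx : (Sum.inr z : A ⊕ V) = Sum.inr x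
      · rw [if_pos hzx]
        have : count (Sum.inr x) w₁ = 0 := List.count_eq_zero.mpr hxw₁
        have hzx' : z = x := by simpa using hzx
        subst hzx'
        rw [if_neg (fun h => hxy' h.symm)] at hy1
        omega
      · rw [if_neg hzx]
        omega
    · exact (hg.1 z).2
  · -- conflict-freeness
    rintro ⟨u, v, h1, h2⟩
    -- h1 : pair in the substituted left side, h2 : pair in `y :: w₂`
    by_cases hyin : Sum.inr y ∈ w₁
    · have hcnt : count (Sum.inr y) w₁ = 1 := by
        have := (hg.1 y).1
        rw [count_cons''] at this
        have := List.count_pos_iff.mpr hyin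
        omega
      obtain ⟨p, sfx, rfl, hp, hs⟩ := exists_split_of_count_one hcnt
      rw [substVar_split _ hp hs] at h1
      -- analyze h1 as a sublist of p ++ x :: y :: sfx
      rw [List.sublist_append_iff] at h1
      obtain ⟨l₁, l₂, hsplit, hl₁, hl₂⟩ := h1
      have hxp : Sum.inr x ∉ p := fun hm => hxw₁ (by simp [hm])
      have hxs : Sum.inr x ∉ sfx := fun hm => hxw₁ (by simp [hm])
      -- the pair (x, y) on the left side
      have pairxy : [Sum.inr x, Sum.inr y] <+
          Sum.inr x :: (p ++ Sum.inr y :: sfx) :=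
        (List.singleton_sublist.mpr (by simp)).cons₂ _
      -- whenever x ∈ y :: w₂ we get a conflict
      have conflxy : Sum.inr x ∈ Sum.inr y :: w₂ → False := by
        intro hm
        rcases List.mem_cons.mp hm with h | h
        · exact hxy' h
        · exact hg.2 ⟨x, y, pairxy, (List.singleton_sublist.mpr h).cons₂ _⟩
      rcases l₁ with _ | ⟨c, l₁⟩
      · simp only [List.nil_append] at hsplit
        subst hsplit
        rcases hl₂ with _ | ⟨_, h⟩ | ⟨_, h⟩
        · -- [u, v] <+ inr y :: sfx, both inside w₁
          refine hg.2 ⟨u, v, (Sublist.trans ‹_› ?_).cons _, h2⟩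
          exact List.sublist_append_right p _
        · -- u = x
          exact conflxy (h2.subset (by simp))
      · rcases l₁ with _ | ⟨d, l₁⟩
        · simp only [List.cons_append, List.nil_append, List.cons.injEq] at hsplit
          obtain ⟨rfl, rfl⟩ := hsplit
          rcases List.mem_cons.mp (List.singleton_sublist.mp hl₂) with h | h
          · -- v = x
            rw [h] at h2
            exact conflxy (h2.subset (by simp))
          · -- v ∈ inr y :: sfx, u ∈ p
            exact hg.2 ⟨u, v,
              (hl₁.append (List.singleton_sublist.mpr h)).cons _, h2⟩
        · -- both u and v inside p
          simp only [List.cons_append, List.cons.injEq] at hsplit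
          obtain ⟨rfl, rfl, hnil⟩ := hsplit
          obtain ⟨rfl, rfl⟩ := List.append_eq_nil_iff.mp hnil.symm
          have hp' : [Sum.inr u, Sum.inr v] <+ p := by simpa using hl₁
          exact hg.2 ⟨u, v,
            (hp'.trans (List.sublist_append_left p _)).cons _, h2⟩
    · rw [substVar_of_not_mem hyin] at h1
      exact hg.2 ⟨u, v, h1.cons _, h2⟩

lemma good_sub {s t : Equation A V} (hg : Good s)
    (h1 : t.1 <+ s.1) (h2 : t.2 <+ s.2) : Good t := by
  constructor
  · intro z
    exact ⟨le_trans (h1.count_le _) (hg.1 z).1, le_trans (h2.count_le _) (hg.1 z).2⟩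
  · rintro ⟨u, v, h1', h2'⟩
    exact hg.2 ⟨u, v, h1'.trans h1, h2'.trans h2⟩

lemma nielsen_good {s t : Equation A V} (hg : Good s) (h : Nielsen s t) : Good t := by
  cases h with
  | eraseL x w₁ w₂ =>
    exact good_sub hg ((substVar_nil_sublist x w₁).trans (List.sublist_cons_self _ _))
      (substVar_nil_sublist x w₂)
  | eraseR w₁ x w₂ =>
    exact good_sub hg (substVar_nil_sublist x w₁)
      ((substVar_nil_sublist x w₂).trans (List.sublist_cons_self _ _))
  | p1 α w₁ w₂ =>
    exact good_sub hg (List.sublist_cons_self _ _) (List.sublist_cons_self _ _)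
  | p2 a y w₁ w₂ => exact good_p2 hg
  | p3 x a w₁ w₂ => exact good_sw (good_p2 (a := a) (y := x) (good_sw hg))
  | p4L x y hxy w₁ w₂ => exact good_p4L hxy hg
  | p4R x y hxy w₁ w₂ => exact good_sw (good_p4L hxy.symm (good_sw hg))

lemma count_head_zero {y : V} {c : A ⊕ V} {w : Word A V}
    (h : count (Sum.inr y) (c :: w) ≤ 1) (hc : c = Sum.inr y) :
    Sum.inr y ∉ w := by
  subst hc
  rw [count_cons_self] at h
  intro hm
  have := List.count_pos_iff.mpr hm
  omega

lemma len_mono {s t : Equation A V} (hg : Good s) (h : Nielsen s t) :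
    t.1.length ≤ s.1.length ∧ t.2.length ≤ s.2.length := by
  cases h with
  | eraseL x w₁ w₂ =>
    exact ⟨le_trans (substVar_nil_sublist x w₁).length_le (by simp),
      (substVar_nil_sublist x w₂).length_le⟩
  | eraseR w₁ x w₂ =>
    exact ⟨(substVar_nil_sublist x w₁).length_le,
      le_trans (substVar_nil_sublist x w₂).length_le (by simp)⟩
  | p1 α w₁ w₂ => exact ⟨by simp, by simp⟩
  | p2 a y w₁ w₂ =>
    have hy1 : count (Sum.inr y) w₁ ≤ 1 :=
      le_trans ((List.sublist_cons_self _ _).count_le _) (hg.1 y).1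
    have hy2 : Sum.inr y ∉ w₂ := count_head_zero (hg.1 y).2 rfl
    constructor
    · simp only [length_substVar_pair]
      simpa using hy1
    · simp only [List.length_cons, length_substVar_pair,
        List.count_eq_zero.mpr hy2]
      simp
  | p3 x a w₁ w₂ =>
    have hx2 : count (Sum.inr x) w₂ ≤ 1 :=
      le_trans ((List.sublist_cons_self _ _).count_le _) (hg.1 x).2
    have hx1 : Sum.inr x ∉ w₁ := count_head_zero (hg.1 x).1 rfl
    constructor
    · simp only [List.length_cons, length_substVar_pair,
        List.count_eq_zero.mpr hx1]
      simp
    · simp only [length_substVar_pair]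
      simpa using hx2
  | p4L x y hxy w₁ w₂ =>
    have hy1 : count (Sum.inr y) w₁ ≤ 1 :=
      le_trans ((List.sublist_cons_self _ _).count_le _) (hg.1 y).1
    have hy2 : Sum.inr y ∉ w₂ := count_head_zero (hg.1 y).2 rfl
    constructor
    · simp only [length_substVar_pair]
      simpa using hy1
    · simp only [List.length_cons, length_substVar_pair,
        List.count_eq_zero.mpr hy2]
      simp
  | p4R x y hxy w₁ w₂ =>
    have hx2 : count (Sum.inr x) w₂ ≤ 1 :=
      le_trans ((List.sublist_cons_self _ _).count_le _) (hg.1 x).2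
    have hx1 : Sum.inr x ∉ w₁ := count_head_zero (hg.1 x).1 rfl
    constructor
    · simp only [List.length_cons, length_substVar_pair,
        List.count_eq_zero.mpr hx1]
      simp
    · simp only [length_substVar_pair]
      simpa using hx2

lemma reach_props {E s : Equation A V} (hE : Good E)
    (h : Relation.ReflTransGen Nielsen E s) :
    Good s ∧ s.1.length ≤ E.1.length ∧ s.2.length ≤ E.2.length := by
  induction h with
  | refl => exact ⟨hE, le_refl _, le_refl _⟩
  | tail hab hbc ih =>
    obtain ⟨hg, h1, h2⟩ := ih
    have hm := len_mono hg hbc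
    exact ⟨nielsen_good hg hbc, le_trans hm.1 h1, le_trans hm.2 h2⟩

/-- A "cycle move": the head of the word is reinserted just before the (unique)
occurrence of the pivot variable `y`. -/
def Move (y : V) (T T' : Word A V) : Prop :=
  ∃ γ p s, γ ≠ Sum.inr y ∧ Sum.inr y ∉ p ∧
    T = γ :: (p ++ Sum.inr y :: s) ∧ T' = p ++ γ :: Sum.inr y :: s

/-- A length-preserving Nielsen transition. -/
def CEdge (s t : Equation A V) : Prop :=
  Nielsen s t ∧ t.1.length = s.1.length ∧ t.2.length = s.2.length

/-- Shape of a length-preserving transition whose static side is the right one. -/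
def DataR (y : V) (s t : Equation A V) : Prop :=
  (∃ w, s.2 = Sum.inr y :: w) ∧ t.2 = s.2 ∧ Move y s.1 t.1

/-- Shape of a length-preserving transition whose static side is the left one. -/
def DataL (y : V) (s t : Equation A V) : Prop :=
  (∃ w, s.1 = Sum.inr y :: w) ∧ t.1 = s.1 ∧ Move y s.2 t.2

omit [DecidableEq A] [DecidableEq V] in
lemma dataR_sw {y : V} {s t : Equation A V} (h : DataL y s t) :
    DataR y (sw s) (sw t) := h

lemma move_of_subst {γ : A ⊕ V} {y : V} (hγ : γ ≠ Sum.inr y) {w : Word A V}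
    (hcnt : count (Sum.inr y) w = 1) :
    Move y (γ :: w) (substVar y [γ, Sum.inr y] w) := by
  obtain ⟨p, sfx, rfl, hp, hs⟩ := exists_split_of_count_one hcnt
  exact ⟨γ, p, sfx, hγ, hp, rfl, substVar_split _ hp hs⟩

/-- Every length-preserving transition from a good state moves the head of one
side before the pivot variable heading the other (unchanged) side. -/
lemma cedge_data {s t : Equation A V} (hg : Good s) (he : CEdge s t) :
    ∃ y, DataR y s t ∨ DataL y s t := by
  obtain ⟨h, hl1, hl2⟩ := he
  cases h with
  | eraseL x w₁ w₂ =>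
    have := (substVar_nil_sublist x w₁).length_le
    simp at hl1
    omega
  | eraseR w₁ x w₂ =>
    have := (substVar_nil_sublist x w₂).length_le
    simp at hl2
    omega
  | p1 α w₁ w₂ => simp at hl1
  | p2 a y w₁ w₂ =>
    have hy2 : Sum.inr y ∉ w₂ := count_head_zero (hg.1 y).2 rfl
    have hcnt : count (Sum.inr y) w₁ = 1 := by
      rw [length_substVar_pair] at hl1
      simp only [List.length_cons] at hl1
      omega
    refine ⟨y, Or.inl ⟨⟨w₂, rfl⟩, ?_, ?_⟩⟩
    · simp [substVar_of_not_mem hy2]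
    · exact move_of_subst (by simp) hcnt
  | p3 x a w₁ w₂ =>
    have hx1 : Sum.inr x ∉ w₁ := count_head_zero (hg.1 x).1 rfl
    have hcnt : count (Sum.inr x) w₂ = 1 := by
      rw [length_substVar_pair] at hl2
      simp only [List.length_cons] at hl2
      omega
    refine ⟨x, Or.inr ⟨⟨w₁, rfl⟩, ?_, ?_⟩⟩
    · simp [substVar_of_not_mem hx1]
    · exact move_of_subst (by simp) hcnt
  | p4L x y hxy w₁ w₂ =>
    have hy2 : Sum.inr y ∉ w₂ := count_head_zero (hg.1 y).2 rfl
    have hcnt : count (Sum.inr y) w₁ = 1 := by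
      rw [length_substVar_pair] at hl1
      simp only [List.length_cons] at hl1
      omega
    refine ⟨y, Or.inl ⟨⟨w₂, rfl⟩, ?_, ?_⟩⟩
    · simp [substVar_of_not_mem hy2]
    · exact move_of_subst (by simp [hxy]) hcnt
  | p4R x y hxy w₁ w₂ =>
    have hx1 : Sum.inr x ∉ w₁ := count_head_zero (hg.1 x).1 rfl
    have hcnt : count (Sum.inr x) w₂ = 1 := by
      rw [length_substVar_pair] at hl2
      simp only [List.length_cons] at hl2
      omega
    refine ⟨x, Or.inr ⟨⟨w₁, rfl⟩, ?_, ?_⟩⟩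
    · simp [substVar_of_not_mem hx1]
    · exact move_of_subst (by simp [hxy.symm]) hcnt

omit [DecidableEq A] [DecidableEq V] in
lemma move_unique {y : V} {T T₁ T₂ : Word A V}
    (h1 : Move y T T₁) (h2 : Move y T T₂) : T₁ = T₂ := by
  obtain ⟨γ, p, s, hγ, hp, rfl, rfl⟩ := h1
  obtain ⟨γ', p', s', hγ', hp', he, rfl⟩ := h2
  simp only [List.cons.injEq] at he
  obtain ⟨rfl, he⟩ := he
  obtain ⟨rfl, rfl⟩ := unique_split he.symm hp' hp
  rfl

omit [DecidableEq A] [DecidableEq V] in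
lemma move_pair {y z : V} {T T' : Word A V} (hm : Move y T T')
    (hhd : ∃ w, T = Sum.inr z :: w) : [Sum.inr z, Sum.inr y] <+ T := by
  obtain ⟨γ, p, s, hγ, hp, rfl, rfl⟩ := hm
  obtain ⟨w, hw⟩ := hhd
  simp only [List.cons.injEq] at hw
  rw [hw.1]
  exact (List.singleton_sublist.mpr (by simp)).cons₂ _

/-- `DataR` and `DataL` cannot both hold at a conflict-free state. -/
lemma not_dataR_dataL {s t₁ t₂ : Equation A V} {y z : V} (hg : Good s)
    (hR : DataR y s t₁) (hL : DataL z s t₂) : False := by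
  obtain ⟨⟨w, hw⟩, _, hmv⟩ := hR
  obtain ⟨⟨w', hw'⟩, _, hmv'⟩ := hL
  have p1 : [Sum.inr z, Sum.inr y] <+ s.1 := move_pair hmv ⟨w', hw'⟩
  have p2 : [Sum.inr y, Sum.inr z] <+ s.2 := move_pair hmv' ⟨w, hw⟩
  exact hg.2 ⟨z, y, p1, p2⟩

lemma cedge_unique {s t₁ t₂ : Equation A V} (hg : Good s)
    (h1 : CEdge s t₁) (h2 : CEdge s t₂) : t₁ = t₂ := by
  obtain ⟨y, hy⟩ := cedge_data hg h1
  obtain ⟨z, hz⟩ := cedge_data hg h2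
  rcases hy with hy | hy <;> rcases hz with hz | hz
  · obtain ⟨⟨w, hw⟩, ht2, hmv⟩ := hy
    obtain ⟨⟨w', hw'⟩, ht2', hmv'⟩ := hz
    have : y = z := by
      rw [hw] at hw'; injection hw' with h _; exact Sum.inr.inj h
    subst this
    have e1 : t₁.1 = t₂.1 := move_unique hmv hmv'
    have e2 : t₁.2 = t₂.2 := by rw [ht2, ht2']
    exact Prod.ext e1 e2
  · exact absurd (not_dataR_dataL hg hy hz) not_false
  · exact absurd (not_dataR_dataL hg hz hy) not_false
  · obtain ⟨⟨w, hw⟩, ht1, hmv⟩ := hy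
    obtain ⟨⟨w', hw'⟩, ht1', hmv'⟩ := hz
    have : y = z := by
      rw [hw] at hw'; injection hw' with h _; exact Sum.inr.inj h
    subst this
    exact Prod.ext (by rw [ht1, ht1']) (move_unique hmv hmv')

/-- The pivot variable and the static side persist along consecutive
length-preserving transitions. -/
lemma pivot_persist {s t u : Equation A V} {y : V} (hgt : Good t)
    (hR : DataR y s t) (he : CEdge t u) : DataR y t u := by
  obtain ⟨⟨w, hw⟩, ht2, hmv⟩ := hR
  obtain ⟨z, hz | hz⟩ := cedge_data hgt he
  · obtain ⟨w', hw'⟩ := hz.1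
    have hyz : z = y := by
      rw [ht2, hw] at hw'; injection hw' with h _; exact (Sum.inr.inj h).symm
    subst hyz
    exact hz
  · -- the moving side cannot flip: this would create a conflict at `t`
    exfalso
    obtain ⟨⟨w', hw'⟩, ht1', hmv'⟩ := hz
    -- t.1 starts with `z` and contains `y`; t.2 starts with `y` and `z` occurs later
    obtain ⟨γ, p, sfx, hγ, hp, hT, hT'⟩ := hmv
    have hyt1 : Sum.inr y ∈ t.1 := by rw [hT']; simp
    have hzy : z ≠ y := by
      intro hzy
      subst hzy
      rw [hw'] at hyt1
      rw [hT'] at hw'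
      -- head of t.1 is not `inr y`
      rcases p with _ | ⟨c, p⟩
      · simp only [List.nil_append, List.cons.injEq] at hw'
        exact hγ hw'.1
      · simp only [List.cons_append, List.cons.injEq] at hw'
        exact hp (by rw [hw'.1]; exact List.mem_cons_self)
    have pairL : [Sum.inr z, Sum.inr y] <+ t.1 := by
      rw [hw']
      rw [hw'] at hyt1
      rcases List.mem_cons.mp hyt1 with h | h
      · exact absurd (Sum.inr.inj h).symm hzy
      · exact (List.singleton_sublist.mpr h).cons₂ _
    have pairR : [Sum.inr y, Sum.inr z] <+ t.2 := move_pair hmv' ⟨w, by rw [ht2, hw]⟩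
    exact hgt.2 ⟨z, y, pairL, pairR⟩

/-- Key lemma: along a length-preserving transition with pivot `y` (static
right side), every counter transition strictly decreases `y` and fixes all
other counters. -/
lemma key_cstep {s t : Equation A V} {y : V} (hg : Good s)
    (hd : DataR y s t) (v v' : V → ℕ)
    (hstep : CStep (s, v) (t, v')) :
    v' y < v y ∧ ∀ z : V, z ≠ y → v' z = v z := by
  obtain ⟨⟨w, hw⟩, ht2, hmv⟩ := hd
  obtain ⟨γ, p, sfx, hγ, hp, hT, hT'⟩ := hmv
  rw [hw] at ht2
  have hs : s = (γ :: (p ++ Sum.inr y :: sfx), Sum.inr y :: w) :=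
    Prod.ext hT hw
  subst hs
  rcases γ with a | x
  · -- head of the moving side is a constant: the step must be a `p2`
    cases hstep with
    | eraseR w₁ x w₂ v hx =>
      -- impossible: the static side would shrink
      exfalso
      have hlen := (substVar_nil_sublist y w).length_le
      have := congrArg List.length ht2
      simp only [List.length_cons] at this
      omega
    | p2 a y w₁ w₂ v hy =>
      refine ⟨?_, fun z hz => Function.update_of_ne hz _ _⟩
      rw [Function.update_self]
      omega
  · -- head of the moving side is a variable
    cases hstep with
    | eraseL x w₁ w₂ v hx =>
      exfalso
      have hlen := (substVar_nil_sublist x (p ++ Sum.inr y :: sfx)).length_le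
      have := congrArg List.length hT'
      simp only [List.length_append, List.length_cons] at this hlen
      omega
    | eraseR w₁ x w₂ v hx =>
      exfalso
      have hlen := (substVar_nil_sublist y w).length_le
      have := congrArg List.length ht2
      simp only [List.length_cons] at this
      omega
    | p1 α w₁ w₂ v =>
      exact absurd rfl hγ
    | p4L x y hxy w₁ w₂ v h₁ h₂ =>
      refine ⟨?_, fun z hz => Function.update_of_ne hz _ _⟩
      rw [Function.update_self]
      omega
    | p4R x y hxy w₁ w₂ v h₁ h₂ =>
      exfalso
      have := congrArg List.length ht2
      rw [length_substVar_pair] at this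
      simp only [List.length_cons] at this
      have hmem : Sum.inr x ∈ w :=
        List.count_pos_iff.mp (by omega)
      exact hg.2 ⟨x, y, (List.singleton_sublist.mpr (by simp)).cons₂ _,
        (List.singleton_sublist.mpr hmem).cons₂ _⟩

omit [DecidableEq A] [DecidableEq V] in
lemma get_congr (l : List (Equation A V)) {a b : ℕ} (ha : a < l.length) (h : a = b) :
    l.get ⟨a, ha⟩ = l.get ⟨b, h ▸ ha⟩ := by subst h; rfl

/-- The `k % n`-th state of a cycle. -/
def nth (l : List (Equation A V)) (hn : 0 < l.length) (k : ℕ) : Equation A V :=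
  l.get ⟨k % l.length, Nat.mod_lt _ hn⟩

omit [DecidableEq A] [DecidableEq V] in
lemma nth_mem (l : List (Equation A V)) (hn : 0 < l.length) (k : ℕ) :
    nth l hn k ∈ l := List.get_mem _ _

omit [DecidableEq A] [DecidableEq V] in
lemma nth_periodic (l : List (Equation A V)) (hn : 0 < l.length) (k : ℕ) :
    nth l hn (k + l.length) = nth l hn k := by
  unfold nth
  exact get_congr l _ (Nat.add_mod_right k l.length)

omit [DecidableEq A] in
lemma nth_edge {E : Equation A V} {l : List (Equation A V)}
    (hl : IsSimpleCycle E l) (hn : 0 < l.length) (k : ℕ) :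
    Nielsen (nth l hn k) (nth l hn (k + 1)) := by
  have h := hl.2.2.2 ⟨k % l.length, Nat.mod_lt _ hn⟩
  have he := get_congr l (Nat.mod_lt (k % l.length + 1) hn) (Nat.mod_add_mod k l.length 1)
  rw [he] at h
  exact h

lemma nth_good {E : Equation A V} {l : List (Equation A V)} (hE : Good E)
    (hl : IsSimpleCycle E l) (hn : 0 < l.length) (k : ℕ) :
    Good (nth l hn k) ∧ (nth l hn k).1.length ≤ E.1.length ∧
      (nth l hn k).2.length ≤ E.2.length :=
  reach_props hE (hl.2.2.1 _ (nth_mem l hn k))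

/-- Around a simple cycle (of a good equation) every transition preserves the
length of each side. -/
lemma edges_cedge {E : Equation A V} {l : List (Equation A V)} (hE : Good E)
    (hl : IsSimpleCycle E l) (hn : 0 < l.length) (k : ℕ) :
    CEdge (nth l hn k) (nth l hn (k + 1)) := by
  have mono1 : ∀ j, (nth l hn (j + 1)).1.length ≤ (nth l hn j).1.length :=
    fun j => (len_mono (nth_good hE hl hn j).1 (nth_edge hl hn j)).1
  have mono2 : ∀ j, (nth l hn (j + 1)).2.length ≤ (nth l hn j).2.length :=
    fun j => (len_mono (nth_good hE hl hn j).1 (nth_edge hl hn j)).2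
  have anti1 : Antitone fun j => (nth l hn j).1.length :=
    antitone_nat_of_succ_le mono1
  have anti2 : Antitone fun j => (nth l hn j).2.length :=
    antitone_nat_of_succ_le mono2
  refine ⟨nth_edge hl hn k, ?_, ?_⟩
  · refine le_antisymm (mono1 k) ?_
    have h1 : (nth l hn k).1.length = (nth l hn (k + l.length)).1.length := by
      rw [nth_periodic]
    have h2 : (nth l hn (k + l.length)).1.length ≤ (nth l hn (k + 1)).1.length :=
      anti1 (by omega)
    omega
  · refine le_antisymm (mono2 k) ?_
    have h1 : (nth l hn k).2.length = (nth l hn (k + l.length)).2.length := by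
      rw [nth_periodic]
    have h2 : (nth l hn (k + l.length)).2.length ≤ (nth l hn (k + 1)).2.length :=
      anti2 (by omega)
    omega

/-- If the first transition of a cycle has pivot `y` with static right side,
then so do all transitions. -/
lemma data_all {E : Equation A V} {l : List (Equation A V)} (hE : Good E)
    (hl : IsSimpleCycle E l) (hn : 0 < l.length) {y : V}
    (h0 : DataR y (nth l hn 0) (nth l hn 1)) (k : ℕ) :
    DataR y (nth l hn k) (nth l hn (k + 1)) := by
  induction k with
  | zero => exact h0
  | succ k ih =>
    exact pivot_persist (nth_good hE hl hn (k + 1)).1 ih (edges_cedge hE hl hn (k + 1))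

omit [DecidableEq A] [DecidableEq V] in
lemma move_iterate {y : V} {T : ℕ → Word A V}
    (hmv : ∀ k, Move y (T k) (T (k + 1))) {γ₀ : A ⊕ V} {p₀ s₀ : Word A V}
    (h0 : T 0 = (γ₀ :: p₀) ++ Sum.inr y :: s₀)
    (hγ₀ : γ₀ ≠ Sum.inr y) (hp₀ : Sum.inr y ∉ p₀) :
    ∀ k, T k = (γ₀ :: p₀).rotate k ++ Sum.inr y :: s₀ := by
  have hyW : Sum.inr y ∉ (γ₀ :: p₀) := by
    simp only [List.mem_cons, not_or]
    exact ⟨fun h => hγ₀ h.symm, hp₀⟩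
  intro k
  induction k with
  | zero => simpa using h0
  | succ k ih =>
    obtain ⟨γ, p, s, hγ, hp, hT, hT'⟩ := hmv k
    rw [ih] at hT
    have hT'' : (γ :: p) ++ Sum.inr y :: s =
        (γ₀ :: p₀).rotate k ++ Sum.inr y :: s₀ := by
      rw [List.cons_append]; exact hT.symm
    have hyrot : Sum.inr y ∉ (γ₀ :: p₀).rotate k := fun hm =>
      hyW ((List.mem_rotate).mp hm)
    have hyγp : Sum.inr y ∉ γ :: p := by
      simp only [List.mem_cons, not_or]
      exact ⟨fun h => hγ h.symm, hp⟩
    obtain ⟨hpe, hse⟩ := unique_split hT'' hyγp hyrot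
    have hrot : (γ₀ :: p₀).rotate (k + 1) = p ++ [γ] := by
      rw [← List.rotate_rotate, ← hpe]
      simp [List.rotate_cons_succ]
    rw [hT', hse, hrot]
    simp

/-- The length bound for a simple cycle whose transitions all have static right
side. -/
lemma cycle_bound {E : Equation A V} {l : List (Equation A V)} (hE : Good E)
    (hl : IsSimpleCycle E l) (hn : 0 < l.length) {y : V}
    (hm : ∀ k, DataR y (nth l hn k) (nth l hn (k + 1))) :
    l.length ≤ max E.1.length E.2.length - 1 := by
  obtain ⟨_, _, hmv0⟩ := hm 0
  obtain ⟨γ₀, p₀, s₀, hγ₀, hp₀, hT0, _⟩ := hmv0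
  have hmv : ∀ k, Move y ((nth l hn k).1) ((nth l hn (k + 1)).1) :=
    fun k => (hm k).2.2
  have hiter : ∀ k, (nth l hn k).1 = (γ₀ :: p₀).rotate k ++ Sum.inr y :: s₀ :=
    move_iterate (T := fun k => (nth l hn k).1) hmv (by simpa using hT0) hγ₀ hp₀
  have hside2 : ∀ k, (nth l hn k).2 = (nth l hn 0).2 := by
    intro k
    induction k with
    | zero => rfl
    | succ k ih => rw [(hm k).2.1, ih]
  have hnm : l.length ≤ (γ₀ :: p₀).length := by
    by_contra hlt
    push_neg at hlt
    have he : nth l hn ((γ₀ :: p₀).length) = nth l hn 0 := by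
      refine Prod.ext ?_ ?_
      · rw [hiter ((γ₀ :: p₀).length), hiter 0, List.rotate_length, List.rotate_zero]
      · exact hside2 _
    have hfin := (List.Nodup.get_inj_iff hl.2.1).mp he
    have hval : (γ₀ :: p₀).length % l.length = 0 % l.length :=
      congrArg Fin.val hfin
    rw [Nat.mod_eq_of_lt hlt, Nat.zero_mod] at hval
    simp at hval
  have hlen : (nth l hn 0).1.length = (γ₀ :: p₀).length + (1 + s₀.length) := by
    rw [hiter 0, List.rotate_zero]
    simp
    omega
  have hE1 := (nth_good hE hl hn 0).2.1
  have hmax : E.1.length ≤ max E.1.length E.2.length := le_max_left _ _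
  have hm1 : 1 ≤ (γ₀ :: p₀).length := by simp
  omega

omit [DecidableEq A] [DecidableEq V] in
lemma exists_rotate_head {l : List (Equation A V)} {s : Equation A V} (h : s ∈ l) :
    ∃ k q, l.rotate k = s :: q := by
  obtain ⟨p, q, rfl⟩ := List.append_of_mem h
  refine ⟨p.length, q ++ p, ?_⟩
  rw [List.rotate_eq_drop_append_take (by simp)]
  simp

omit [DecidableEq A] [DecidableEq V] in
lemma rotate_back (l : List (Equation A V)) (k : ℕ) :
    ∃ j, (l.rotate k).rotate j = l := by
  rcases Nat.eq_zero_or_pos l.length with h0 | h0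
  · exact ⟨0, by simp [List.length_eq_zero_iff.mp h0]⟩
  · refine ⟨l.length - k % l.length, ?_⟩
    rw [List.rotate_rotate]
    have hmod : (k + (l.length - k % l.length)) % l.length = 0 := by
      rw [← Nat.mod_add_mod]
      have := Nat.mod_lt k h0
      have h1 : k % l.length + (l.length - k % l.length) = l.length := by omega
      rw [h1, Nat.mod_self]
    rw [← List.rotate_mod, hmod, List.rotate_zero]

omit [DecidableEq A] in
lemma isSimpleCycle_rotate {E : Equation A V} {l : List (Equation A V)}
    (hl : IsSimpleCycle E l) (k : ℕ) : IsSimpleCycle E (l.rotate k) := by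
  obtain ⟨hne, hnd, hreach, hedge⟩ := hl
  have hn : 0 < l.length := List.length_pos_iff.mpr hne
  refine ⟨?_, ?_, ?_, ?_⟩
  · intro h
    exact hne (List.length_eq_zero_iff.mp (by
      have := congrArg List.length h
      simpa using this))
  · exact ((l.rotate_perm k).nodup_iff).mpr hnd
  · intro s hs
    exact hreach s ((List.mem_rotate).mp hs)
  · intro i
    have hlen : (l.rotate k).length = l.length := List.length_rotate l k
    rw [List.get_rotate, List.get_rotate]
    have h := hedge ⟨((i : ℕ) + k) % l.length, Nat.mod_lt _ hn⟩
    have he : ∀ iv : ℕ, ((iv + k) % l.length + 1) % l.length =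
        ((iv + 1) % (l.rotate k).length + k) % l.length := by
      intro iv
      rw [hlen, Nat.mod_add_mod, Nat.mod_add_mod]
      congr 1
      omega
    rw [get_congr l _ (he (i : ℕ))] at h
    exact h

/-- Two simple cycles agree pointwise as far as both are defined. -/
lemma cycle_pointwise {E : Equation A V} (hE : Good E)
    {l₁ l₂ : List (Equation A V)}
    (h1 : IsSimpleCycle E l₁) (h2 : IsSimpleCycle E l₂)
    (hn₁ : 0 < l₁.length) (hn₂ : 0 < l₂.length)
    (h0 : nth l₁ hn₁ 0 = nth l₂ hn₂ 0) :
    ∀ k, k < l₁.length → k < l₂.length → nth l₁ hn₁ k = nth l₂ hn₂ k := by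
  intro k
  induction k with
  | zero => intro _ _; exact h0
  | succ k ih =>
    intro hk1 hk2
    have hk := ih (by omega) (by omega)
    have e1 := edges_cedge hE h1 hn₁ k
    have e2 := edges_cedge hE h2 hn₂ k
    rw [← hk] at e2
    exact cedge_unique (nth_good hE h1 hn₁ k).1 e1 e2

lemma cycle_len_not_lt {E : Equation A V} (hE : Good E)
    {l₁ l₂ : List (Equation A V)}
    (h1 : IsSimpleCycle E l₁) (h2 : IsSimpleCycle E l₂)
    (hn₁ : 0 < l₁.length) (hn₂ : 0 < l₂.length)
    (h0 : nth l₁ hn₁ 0 = nth l₂ hn₂ 0) :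
    ¬ l₁.length < l₂.length := by
  intro hlt
  have hpt := cycle_pointwise hE h1 h2 hn₁ hn₂ h0
  set n₁ := l₁.length with hn₁'
  have hk1 : n₁ - 1 < n₁ := by omega
  have hk2 : n₁ - 1 < l₂.length := by omega
  have hk := hpt (n₁ - 1) hk1 hk2
  have e1 := edges_cedge hE h1 hn₁ (n₁ - 1)
  have e2 := edges_cedge hE h2 hn₂ (n₁ - 1)
  rw [← hk] at e2
  have heq := cedge_unique (nth_good hE h1 hn₁ (n₁ - 1)).1 e1 e2
  have hsucc : n₁ - 1 + 1 = n₁ := by omega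
  rw [hsucc] at heq
  -- `nth l₁ n₁ = nth l₁ 0`
  have hper : nth l₁ hn₁ n₁ = nth l₁ hn₁ 0 := by
    have := nth_periodic l₁ hn₁ 0
    simpa using this
  have hfinal : nth l₂ hn₂ n₁ = nth l₂ hn₂ 0 := by
    rw [← heq, hper, h0]
  have hfin := (List.Nodup.get_inj_iff h2.2.1).mp hfinal
  have hval : n₁ % l₂.length = 0 % l₂.length := congrArg Fin.val hfin
  rw [Nat.mod_eq_of_lt hlt, Nat.zero_mod] at hval
  omega

/-- Two simple cycles through the same state (at position 0) are equal. -/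
lemma cycle_eq {E : Equation A V} (hE : Good E)
    {l₁ l₂ : List (Equation A V)}
    (h1 : IsSimpleCycle E l₁) (h2 : IsSimpleCycle E l₂)
    (hn₁ : 0 < l₁.length) (hn₂ : 0 < l₂.length)
    (h0 : nth l₁ hn₁ 0 = nth l₂ hn₂ 0) : l₁ = l₂ := by
  have hle1 := cycle_len_not_lt hE h1 h2 hn₁ hn₂ h0
  have hle2 := cycle_len_not_lt hE h2 h1 hn₂ hn₁ h0.symm
  have hlen : l₁.length = l₂.length := by omega
  refine List.ext_get hlen ?_
  intro k hk1 hk2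
  have := cycle_pointwise hE h1 h2 hn₁ hn₂ h0 k hk1 hk2
  unfold nth at this
  rw [get_congr l₁ _ (Nat.mod_eq_of_lt hk1), get_congr l₂ _ (Nat.mod_eq_of_lt hk2)] at this
  exact this

omit [DecidableEq A] [DecidableEq V] in
lemma sw_injective : Function.Injective (sw : Equation A V → Equation A V) := by
  intro a b hab
  exact Prod.ext (congrArg Prod.snd hab) (congrArg Prod.fst hab)

omit [DecidableEq A] in
lemma isSimpleCycle_map_sw {E : Equation A V} {l : List (Equation A V)}
    (hl : IsSimpleCycle E l) : IsSimpleCycle (sw E) (l.map sw) := by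
  obtain ⟨hne, hnd, hreach, hedge⟩ := hl
  have hlen : (l.map sw).length = l.length := List.length_map sw
  refine ⟨by simpa using hne, hnd.map sw_injective, ?_, ?_⟩
  · intro s hs
    obtain ⟨a, ha, rfl⟩ := List.mem_map.mp hs
    exact Relation.ReflTransGen.lift sw (fun a b h => nielsen_sw h) _ _ (hreach a ha)
  · intro i
    simp only [List.get_eq_getElem, List.getElem_map]
    apply nielsen_sw
    have h := hedge ⟨(i : ℕ), by omega⟩
    have he : ∀ iv : ℕ, (iv + 1) % l.length = (iv + 1) % (l.map sw).length :=
      fun iv => by rw [hlen]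
    rw [get_congr l _ (he (i : ℕ))] at h
    exact h

omit [DecidableEq A] [DecidableEq V] in
lemma nth_map_sw {l : List (Equation A V)} (hn : 0 < l.length)
    (hn' : 0 < (l.map sw).length) (k : ℕ) :
    nth (l.map sw) hn' k = sw (nth l hn k) := by
  have hlen : (l.map sw).length = l.length := List.length_map sw
  have h1 : nth (l.map sw) hn' k =
      sw (l.get ⟨k % (l.map sw).length, by have := Nat.mod_lt k hn'; omega⟩) := List.getElem_map sw
  rw [h1]
  exact congrArg sw (get_congr l _ (by rw [hlen]))

end Aux

/-- For a regular-oriented word equation `E`, the control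
structure of `CA(E)` is flat: every control state lies on at most one simple
cycle (any two simple cycles through a common state are rotations of each
other).  Moreover, every simple cycle is 1-variable-reducing: there is a
single variable `y` such that every counter transition along the cycle is a
`DEC_y` or `SUB_{y,z}` update, i.e. it strictly decreases the counter `y` and
leaves all other counters unchanged; and the length of every simple cycle is
at most `max (|L|, |R|) - 1` where `E` is `L = R`. -/
theorem regularOriented_flat
    [Finite A] [Finite V] [DecidableEq A] [DecidableEq V]
    (E : Equation A V) (hro : RegularOriented E) :
    (∀ l₁ l₂ : List (Equation A V),
        IsSimpleCycle E l₁ → IsSimpleCycle E l₂ →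
        ∀ s, s ∈ l₁ → s ∈ l₂ → ∃ k, l₂ = l₁.rotate k) ∧
    (∀ l : List (Equation A V), IsSimpleCycle E l →
        (∃ y : V, ∀ (i : Fin l.length) (v v' : V → ℕ),
            CStep (l.get i, v)
              (l.get ⟨((i : ℕ) + 1) % l.length, Nat.mod_lt _ i.pos⟩, v') →
              v' y < v y ∧ ∀ z : V, z ≠ y → v' z = v z) ∧
        l.length ≤ max E.1.length E.2.length - 1) := by
  have hE : Good E := good_of_regularOriented hro
  constructor
  · -- flatness
    intro l₁ l₂ hc₁ hc₂ s hs₁ hs₂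
    obtain ⟨k₁, q₁, hr₁⟩ := exists_rotate_head hs₁
    obtain ⟨k₂, q₂, hr₂⟩ := exists_rotate_head hs₂
    have hc₁' : IsSimpleCycle E (s :: q₁) := hr₁ ▸ isSimpleCycle_rotate hc₁ k₁
    have hc₂' : IsSimpleCycle E (s :: q₂) := hr₂ ▸ isSimpleCycle_rotate hc₂ k₂
    have hn₁ : 0 < (s :: q₁).length := by simp
    have hn₂ : 0 < (s :: q₂).length := by simp
    have h0 : nth (s :: q₁) hn₁ 0 = nth (s :: q₂) hn₂ 0 := by
      unfold nth
      rw [get_congr _ _ (Nat.zero_mod _), get_congr _ _ (Nat.zero_mod _)]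
      rfl
    have heq : s :: q₁ = s :: q₂ := cycle_eq hE hc₁' hc₂' hn₁ hn₂ h0
    obtain ⟨j, hj⟩ := rotate_back l₂ k₂
    refine ⟨k₁ + j, ?_⟩
    rw [← List.rotate_rotate, hr₁, heq, ← hr₂, hj]
  · -- 1-variable-reducing cycles and the length bound
    intro l hl
    have hn : 0 < l.length := List.length_pos_iff.mpr hl.1
    obtain ⟨y, hy | hy⟩ :=
      cedge_data (nth_good hE hl hn 0).1 (edges_cedge hE hl hn 0)
    · -- the static side is the right one
      have hm : ∀ k, DataR y (nth l hn k) (nth l hn (k + 1)) :=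
        data_all hE hl hn hy
      refine ⟨⟨y, ?_⟩, cycle_bound hE hl hn hm⟩
      intro i v v' hstep
      have hgi : l.get i = nth l hn (i : ℕ) :=
        get_congr l i.isLt (Nat.mod_eq_of_lt i.isLt).symm
      rw [hgi] at hstep
      have hstep2 : CStep (nth l hn (i : ℕ), v) (nth l hn ((i : ℕ) + 1), v') := hstep
      exact key_cstep (nth_good hE hl hn (i : ℕ)).1 (hm (i : ℕ)) v v' hstep2
    · -- the static side is the left one: pass to the swapped equation
      have hl' : IsSimpleCycle (sw E) (l.map sw) := isSimpleCycle_map_sw hl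
      have hn' : 0 < (l.map sw).length := by
        rw [List.length_map]; exact hn
      have hy' : DataR y (nth (l.map sw) hn' 0) (nth (l.map sw) hn' 1) := by
        rw [nth_map_sw hn hn' 0, nth_map_sw hn hn' 1]
        exact dataR_sw hy
      have hE' : Good (sw E) := good_sw hE
      have hm : ∀ k, DataR y (nth (l.map sw) hn' k) (nth (l.map sw) hn' (k + 1)) :=
        data_all hE' hl' hn' hy'
      constructor
      · refine ⟨y, ?_⟩
        intro i v v' hstep
        have hgi : l.get i = nth l hn (i : ℕ) :=
          get_congr l i.isLt (Nat.mod_eq_of_lt i.isLt).symm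
        rw [hgi] at hstep
        have hstep2 : CStep (nth l hn (i : ℕ), v) (nth l hn ((i : ℕ) + 1), v') := hstep
        have hstep' := cstep_sw hstep2
        rw [← nth_map_sw hn hn' (i : ℕ), ← nth_map_sw hn hn' ((i : ℕ) + 1)] at hstep'
        exact key_cstep (nth_good hE' hl' hn' (i : ℕ)).1 (hm (i : ℕ)) v v' hstep'
      · have hb := cycle_bound hE' hl' hn' hm
        rw [List.length_map] at hb
        have : max (sw E).1.length (sw E).2.length =
            max E.1.length E.2.length := Nat.max_comm _ _
        rw [this] at hb
        exact hb

end WordEq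
end

section
/- Let A = {a, b, #} with a, b, # pairwise distinct letters, and let L = {#·w : w ∈ {a,b}*} ⊆ A*. For all natural numbers m, n, k: there exist words x ∈ L, y ∈ L, and z ∈ A* with |x| = m, |y| = n, |z| = k and x·z = z·y, if and only if m = n, m > 0, and m divides k. -/
private lemma join_replicate_comm {A : Type*} (w : List A) :
    ∀ q, w ++ (List.replicate q w).flatten = (List.replicate q w).flatten ++ w := by
  intro q
  induction q with
  | zero => simp
  | succ n ih =>
    simp only [List.replicate_succ, List.flatten_cons]
    rw [List.append_assoc, ih, ← List.append_assoc]

private lemma div_aux {A : Type*} (hash : A) :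
    ∀ k : ℕ, ∀ (t s z : List A), (∀ c ∈ t, c ≠ hash) → z.length = k →
      (hash :: t) ++ z = z ++ (hash :: s) → (t.length + 1) ∣ k := by
  intro k
  induction k using Nat.strong_induction_on with
  | _ k ih =>
    intro t s z ht hz heq
    rcases Nat.eq_zero_or_pos k with hk0 | hkpos
    · simp [hk0]
    set m := t.length + 1 with hm
    -- compare element at index k
    have hcmp : ((hash :: t) ++ z)[k]? = (z ++ (hash :: s))[k]? := by
      rw [heq]
    have hright : (z ++ (hash :: s))[k]? = some hash := by
      rw [List.getElem?_append_right (by omega)]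
      simp [hz]
    have hkm : m ≤ k := by
      by_contra hlt
      push_neg at hlt
      have hleft : ((hash :: t) ++ z)[k]? = (hash :: t)[k]? := by
        rw [List.getElem?_append_left (by simp; omega)]
      rw [hleft, hright] at hcmp
      obtain ⟨j, rfl⟩ : ∃ j, k = j + 1 := ⟨k - 1, by omega⟩
      simp only [List.getElem?_cons_succ] at hcmp
      have : hash ∈ t := List.mem_of_getElem? hcmp
      exact ht _ this rfl
    have hlen : m ≤ z.length := by omega
    have htake : z.take m = hash :: t := by
      have h1 : ((hash :: t) ++ z).take m = hash :: t := by
        rw [List.take_append_of_le_length (by simp [hm])]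
        simp [hm]
      have h2 : (z ++ (hash :: s)).take m = z.take m := by
        rw [List.take_append_of_le_length hlen]
      rw [heq] at h1
      rw [h2] at h1
      exact h1
    set z' := z.drop m with hz'
    have hzdecomp : z = (hash :: t) ++ z' := by
      rw [← htake, hz', List.take_append_drop]
    have heq' : (hash :: t) ++ z' = z' ++ (hash :: s) := by
      have := heq
      rw [hzdecomp] at this
      simp only [List.append_assoc] at this
      exact List.append_cancel_left this
    have hz'len : z'.length = k - m := by
      rw [hz', List.length_drop, hz]
    have hrec : m ∣ (k - m) := ih (k - m) (by omega) t s z' ht hz'len heq'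
    obtain ⟨c, hc⟩ := hrec
    exact ⟨c + 1, by rw [Nat.mul_succ, ← hc]; omega⟩

/-- Let `a, b, #` be pairwise distinct letters and let
`L = #·{a,b}*`. For all naturals `m, n, k`: there are words `x ∈ L`, `y ∈ L`
and `z` with `|x| = m`, `|y| = n`, `|z| = k` and `x·z = z·y` iff `m = n`,
`m > 0` and `m` divides `k`. -/
theorem lenAbs_xz_eq_zy_with_regular_constraints
    {A : Type*} (a b hash : A) (hab : a ≠ b) (hah : a ≠ hash) (hbh : b ≠ hash)
    (m n k : ℕ) :
    (∃ x y z : List A,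
        (∃ t : List A, (∀ c ∈ t, c = a ∨ c = b) ∧ x = hash :: t) ∧
        (∃ t : List A, (∀ c ∈ t, c = a ∨ c = b) ∧ y = hash :: t) ∧
        x.length = m ∧ y.length = n ∧ z.length = k ∧
        x ++ z = z ++ y) ↔
      (m = n ∧ 0 < m ∧ m ∣ k) := by
  constructor
  · rintro ⟨x, y, z, ⟨t, ht, rfl⟩, ⟨s, hs, rfl⟩, hx, hy, hzk, heq⟩
    have hlen := congrArg List.length heq
    simp only [List.length_append, List.length_cons] at hlen hx hy
    have hmn : m = n := by omega
    have hm0 : 0 < m := by omega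
    have ht' : ∀ c ∈ t, c ≠ hash := by
      intro c hc
      rcases ht c hc with rfl | rfl
      · exact hah
      · exact hbh
    have hdvd : (t.length + 1) ∣ k := div_aux hash k t s z ht' hzk heq
    exact ⟨hmn, hm0, hx ▸ hdvd⟩
  · rintro ⟨rfl, hm0, ⟨q, rfl⟩⟩
    obtain ⟨m', rfl⟩ : ∃ m', m = m' + 1 := ⟨m - 1, by omega⟩
    set w : List A := hash :: List.replicate m' a with hw
    refine ⟨w, w, (List.replicate q w).flatten,
      ⟨List.replicate m' a, fun c hc => Or.inl (List.eq_of_mem_replicate hc), rfl⟩,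
      ⟨List.replicate m' a, fun c hc => Or.inl (List.eq_of_mem_replicate hc), rfl⟩,
      by simp [hw], by simp [hw], ?_, join_replicate_comm w q⟩
    simp [hw]
    ring
end

section
/- The set {(m, n, k) ∈ ℕ³ : m = n, m > 0, and m divides k} is not semilinear. Consequently, there exists a regular-oriented word equation with regular constraints whose length abstraction is not Presburger-definable. -/
/-- A linear subset of a commutative monoid: a base point plus all
`ℕ`-combinations of finitely many periods. -/
def IsLinearSet' {M : Type*} [AddCommMonoid M] (S : Set M) : Prop :=
  ∃ (b : M) (m : ℕ) (p : Fin m → M),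
    S = {v | ∃ lam : Fin m → ℕ, v = b + ∑ i, lam i • p i}

/-- A semilinear set is a finite union of linear sets.  By the
Ginsburg–Spanier theorem, a subset of `ℕ^k` is Presburger-definable iff it is
semilinear. -/
def IsSemilinearSet' {M : Type*} [AddCommMonoid M] (S : Set M) : Prop :=
  ∃ (n : ℕ) (T : Fin n → Set M), (∀ i, IsLinearSet' (T i)) ∧ S = ⋃ i, T i

namespace WordEq

variable {A V : Type*}

/-- The length abstraction of a word equation under regular constraints
`C : V → Language A`: the set of tuples of lengths of the variables under the
solutions of `E` satisfying the constraints. -/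
def lenAbsC (E : Equation A V) (C : V → Language A) : Set (V → ℕ) :=
  {v | ∃ σ : V → List A,
    IsSolution σ E ∧ (∀ x : V, σ x ∈ C x) ∧ ∀ x : V, (σ x).length = v x}

section AuxSemilinear

/-- The key non-semilinearity fact. -/
theorem aux_not_semilinear :
    ¬ IsSemilinearSet' {t : ℕ × ℕ × ℕ | t.1 = t.2.1 ∧ 0 < t.1 ∧ t.1 ∣ t.2.2} := by
  rintro ⟨n, T, hlin, hS⟩
  set S : Set (ℕ × ℕ × ℕ) := {t : ℕ × ℕ × ℕ | t.1 = t.2.1 ∧ 0 < t.1 ∧ t.1 ∣ t.2.2} with hSdef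
  have hsub : Set.Ioi 0 ⊆ ⋃ i, {m : ℕ | (m, m, m * m) ∈ T i} := by
    intro m hm
    have : (m, m, m * m) ∈ S := ⟨rfl, hm, ⟨m, rfl⟩⟩
    rw [hS] at this
    simpa using this
  have hinf : ∃ i, {m : ℕ | (m, m, m * m) ∈ T i}.Infinite := by
    by_contra h
    push_neg at h
    have := (Set.finite_iUnion h).subset hsub
    exact (Set.Ioi_infinite 0) this
  obtain ⟨i, hMi⟩ := hinf
  obtain ⟨b, r, p, hT⟩ := hlin i
  have hTsub : T i ⊆ S := by
    rw [hS]; exact Set.subset_iUnion _ i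
  have hj : ∃ j, 0 < (p j).1 := by
    by_contra h
    push_neg at h
    have hall : ∀ m ∈ {m : ℕ | (m, m, m * m) ∈ T i}, m = b.1 := by
      intro m hm
      rw [hT] at hm
      obtain ⟨lam, hlam⟩ := hm
      have : m = b.1 + ∑ k, lam k • (p k).1 := by
        have h' := congrArg Prod.fst hlam
        simpa [Prod.fst_sum, smul_eq_mul] using h'
      have hz : ∀ k ∈ Finset.univ, lam k • (p k).1 = 0 := by
        intro k _
        have : (p k).1 = 0 := Nat.le_zero.mp (h k)
        simp [this]
      rw [Finset.sum_congr rfl hz] at this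
      simpa using this
    exact hMi ((Set.finite_singleton b.1).subset (fun m hm => hall m hm))
  obtain ⟨j, hq1⟩ := hj
  set q1 := (p j).1 with hq1def
  set q3 := (p j).2.2 with hq3def
  obtain ⟨m, hmT, hm⟩ := hMi.exists_gt q3
  have hm0 : 0 < m := lt_of_le_of_lt (Nat.zero_le _) hm
  rw [hT] at hmT
  obtain ⟨lam, hlam⟩ := hmT
  have hpump : ∀ N : ℕ, (m + N * q1) ∣ (m * m + N * q3) := by
    intro N
    have hmem : (m, m, m * m) + N • p j ∈ T i := by
      rw [hT]
      refine ⟨fun t => lam t + (if t = j then N else 0), ?_⟩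
      rw [hlam]
      have : ∀ t ∈ Finset.univ, (lam t + (if t = j then N else 0)) • p t
          = lam t • p t + (if t = j then N • p t else 0) := by
        intro t _
        by_cases ht : t = j <;> simp [ht, add_smul]
      rw [Finset.sum_congr rfl this, Finset.sum_add_distrib,
        Finset.sum_ite_eq' Finset.univ j (fun t => N • p t)]
      simp [add_assoc]
    have hmemS := hTsub hmem
    have h1 : ((m, m, m * m) + N • p j).1 = m + N * q1 := by
      simp [Prod.fst_add, smul_eq_mul, hq1def]
    have h3 : ((m, m, m * m) + N • p j).2.2 = m * m + N * q3 := by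
      simp [smul_eq_mul, hq3def]
    obtain ⟨-, -, hdvd⟩ := hmemS
    rwa [h1, h3] at hdvd
  set N := q1 * m * m + 1 with hN
  set A := m + N * q1 with hA
  have hdvd := hpump N
  have hd1 : A ∣ q1 * m * m + N * (q1 * q3) := by
    have := hdvd.mul_left q1
    have he : q1 * (m * m + N * q3) = q1 * m * m + N * (q1 * q3) := by ring
    rwa [he] at this
  have hd2 : A ∣ q3 * m + N * (q1 * q3) := by
    have : A ∣ q3 * A := ⟨q3, by ring⟩
    have he : q3 * A = q3 * m + N * (q1 * q3) := by rw [hA]; ring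
    rwa [he] at this
  have hd : A ∣ q1 * m * m - q3 * m := by
    have := Nat.dvd_sub hd1 hd2
    have he : q1 * m * m + N * (q1 * q3) - (q3 * m + N * (q1 * q3)) = q1 * m * m - q3 * m := by
      omega
    rwa [he] at this
  have hlt : q3 * m < q1 * m * m := by
    have h1 : q3 * m < m * m := Nat.mul_lt_mul_of_pos_right hm hm0
    have h2 : m * m ≤ q1 * (m * m) := Nat.le_mul_of_pos_left (m * m) hq1
    rw [← mul_assoc] at h2
    omega
  have hle := Nat.le_of_dvd (by omega) hd
  have hAge : N ≤ A := by
    have : N ≤ N * q1 := Nat.le_mul_of_pos_right N hq1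
    omega
  omega

/-- Semilinearity is preserved by additive monoid homomorphisms. -/
theorem aux_semilinear_image {M N : Type*} [AddCommMonoid M] [AddCommMonoid N]
    (f : M →+ N) {S : Set M} (h : IsSemilinearSet' S) : IsSemilinearSet' (f '' S) := by
  obtain ⟨n, T, hlin, hS⟩ := h
  refine ⟨n, fun i => f '' T i, fun i => ?_, by rw [hS, Set.image_iUnion]⟩
  obtain ⟨b, m, p, hT⟩ := hlin i
  refine ⟨f b, m, fun k => f (p k), ?_⟩
  show f '' T i = _
  rw [hT]
  ext v
  constructor
  · rintro ⟨w, ⟨lam, rfl⟩, rfl⟩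
    exact ⟨lam, by simp [map_add, map_sum, map_nsmul]⟩
  · rintro ⟨lam, rfl⟩
    exact ⟨b + ∑ i, lam i • p i, ⟨lam, rfl⟩, by simp [map_add, map_sum, map_nsmul]⟩

end AuxSemilinear

section AuxWords

variable {A : Type*}

/-- `n`-fold repetition of a list. -/
def listPow (w : List A) : ℕ → List A
  | 0 => []
  | n + 1 => w ++ listPow w n

lemma listPow_comm (w : List A) (n : ℕ) : w ++ listPow w n = listPow w n ++ w := by
  induction n with
  | zero => simp [listPow]
  | succ n ih =>
    show w ++ (w ++ listPow w n) = (w ++ listPow w n) ++ w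
    rw [ih, ← List.append_assoc, ih]

lemma listPow_length (w : List A) (n : ℕ) : (listPow w n).length = n * w.length := by
  induction n with
  | zero => simp [listPow]
  | succ n ih => simp [listPow, ih]; ring

/-- Key word-combinatorics lemma: if `x ++ z = z ++ y` with `x`, `y` starting
with a letter `hash` not occurring elsewhere in them, then `|x|` divides `|z|`. -/
lemma aux_conj_dvd (hash : A) : ∀ n (z x y : List A), z.length = n →
    (∃ u, x = hash :: u ∧ hash ∉ u) → (∃ u', y = hash :: u' ∧ hash ∉ u') →
    x ++ z = z ++ y → x.length ∣ z.length := by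
  intro n
  induction n using Nat.strong_induction_on with
  | _ n ih =>
    intro z x y hzn ⟨u, hx, hu⟩ ⟨u', hy, hu'⟩ heq
    by_cases hlen : z.length < x.length
    · rcases z with _ | ⟨c, z'⟩
      · simp
      · exfalso
        have hdrop := congrArg (List.drop (c :: z').length) heq
        rw [List.drop_append_of_le_length (le_of_lt hlen), List.drop_left] at hdrop
        have hne : x.drop (c :: z').length ≠ [] := by
          intro h
          have h2 := congrArg List.length h
          simp only [List.length_drop, List.length_nil] at h2
          omega
        have hhead : (x.drop (c :: z').length).head? = some hash := by
          have h2 := congrArg List.head? hdrop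
          rw [List.head?_append_of_ne_nil _ hne] at h2
          rw [hy] at h2
          simpa using h2
        have hmem : hash ∈ x.drop (c :: z').length := by
          rcases hd : x.drop (c :: z').length with _ | ⟨d, t⟩
          · exact absurd hd hne
          · rw [hd] at hhead; simp at hhead; simp [hd, hhead]
        have : x.drop (c :: z').length ⊆ u := by
          rw [hx]
          show (hash :: u).drop (z'.length + 1) ⊆ u
          rw [List.drop_succ_cons]
          exact (List.drop_subset _ _)
        exact hu (this hmem)
    · push_neg at hlen
      have htake := congrArg (List.take x.length) heq
      rw [List.take_left, List.take_append_of_le_length hlen] at htake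
      set z' := z.drop x.length with hz'
      have hzsplit : z = x ++ z' := by
        rw [htake, hz', List.take_append_drop]
      have heq' : x ++ z' = z' ++ y := by
        have h2 : x ++ (x ++ z') = x ++ (z' ++ y) := by
          rw [← hzsplit, heq, hzsplit, List.append_assoc]
        exact List.append_cancel_left h2
      have hxpos : 0 < x.length := by rw [hx]; simp
      have hz'lt : z'.length < n := by
        rw [← hzn, hz', List.length_drop]
        omega
      have := ih z'.length hz'lt z' x y rfl ⟨u, hx, hu⟩ ⟨u', hy, hu'⟩ heq'
      have hzl : z.length = x.length + z'.length := by
        rw [hzsplit]; simp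
      rw [hzl]
      exact Nat.dvd_add (dvd_refl _) this

end AuxWords

section AuxDFA

variable {A : Type*} [DecidableEq A]

/-- A DFA for the language `hash · (a + b)*`. -/
def hashDFA (a b hash : A) : DFA A (Fin 3) where
  step s c :=
    if s = 0 then (if c = hash then 1 else 2)
    else if s = 1 then (if c = a ∨ c = b then 1 else 2)
    else 2
  start := 0
  accept := {1}

lemma hashDFA_evalFrom2 (a b hash : A) (w : List A) :
    (hashDFA a b hash).evalFrom 2 w = 2 := by
  induction w with
  | nil => rfl
  | cons c w ih => simpa [DFA.evalFrom, hashDFA] using ih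

lemma hashDFA_evalFrom1 (a b hash : A) (w : List A) :
    (hashDFA a b hash).evalFrom 1 w = 1 ↔ ∀ c ∈ w, c = a ∨ c = b := by
  induction w with
  | nil => simp [DFA.evalFrom]
  | cons c w ih =>
    by_cases hc : c = a ∨ c = b
    · have hstep : (hashDFA a b hash).step 1 c = 1 := by
        simp [hashDFA, hc]
      simp only [DFA.evalFrom, List.foldl_cons] at ih ⊢
      rw [hstep]
      simp [ih, hc]
    · have hstep : (hashDFA a b hash).step 1 c = 2 := by
        simp [hashDFA, hc]
      simp only [DFA.evalFrom, List.foldl_cons]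
      rw [hstep]
      have h2 := hashDFA_evalFrom2 a b hash w
      simp only [DFA.evalFrom] at h2
      rw [h2]
      simp [hc]
lemma hashDFA_accepts (a b hsh : A) :
    (hashDFA a b hsh).accepts
      = {w : List A | ∃ u, w = hsh :: u ∧ ∀ c ∈ u, c = a ∨ c = b} := by
  ext w
  rw [DFA.mem_accepts]
  cases w with
  | nil =>
    constructor
    · intro h
      have h0 : ((hashDFA a b hsh).eval [] : Fin 3) = 0 := rfl
      rw [h0] at h
      simp only [hashDFA, Set.mem_singleton_iff] at h
      exact absurd h (by decide)
    · rintro ⟨u, h, -⟩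
      exact absurd h (by simp)
  | cons c w =>
    have heval : (hashDFA a b hsh).eval (c :: w)
        = (hashDFA a b hsh).evalFrom ((hashDFA a b hsh).step 0 c) w := rfl
    by_cases hc : c = hsh
    · have hstep : (hashDFA a b hsh).step 0 c = 1 := by simp [hashDFA, hc]
      rw [heval, hstep]
      have hacc : ∀ s : Fin 3, (s ∈ (hashDFA a b hsh).accept ↔ s = 1) := by
        intro s
        simp [hashDFA]
      rw [hacc, hashDFA_evalFrom1]
      constructor
      · intro h
        exact ⟨w, by rw [hc], h⟩
      · rintro ⟨u, hcw, hgood⟩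
        have hw : w = u := by
          simpa using congrArg List.tail hcw
        rw [hw]
        exact hgood
    · have hstep : (hashDFA a b hsh).step 0 c = 2 := by simp [hashDFA, hc]
      rw [heval, hstep]
      constructor
      · intro h
        rw [hashDFA_evalFrom2] at h
        simp only [hashDFA, Set.mem_singleton_iff] at h
        exact absurd h (by decide)
      · rintro ⟨u, hcw, -⟩
        have : c = hsh := by
          simpa using congrArg List.head? hcw
        exact absurd this hc

/-- A one-state DFA accepting everything. -/
def allDFA (A : Type*) : DFA A Unit where
  step _ _ := ()
  start := ()
  accept := Set.univ

lemma allDFA_accepts : (allDFA A).accepts = (Set.univ : Set (List A)) := by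
  ext w
  rw [DFA.mem_accepts]
  constructor <;> intro <;> trivial

end AuxDFA

section AuxMain

variable {A : Type*} [DecidableEq A]

lemma aux_sideOrdered (lt : Fin 3 → Fin 3 → Prop) (i j : Fin 3) (hij : lt i j) :
    SideOrdered lt ([Sum.inr i, Sum.inr j] : Word A (Fin 3)) := by
  intro w1 w2 w3 α β h
  have hl := congrArg List.length h
  simp only [List.length_append, List.length_cons, List.length_nil] at hl
  have h1 : w1 = [] := List.length_eq_zero_iff.mp (by omega)
  have h2 : w2 = [] := List.length_eq_zero_iff.mp (by omega)
  have h3 : w3 = [] := List.length_eq_zero_iff.mp (by omega)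
  subst h1; subst h2; subst h3
  simp only [List.nil_append, List.cons.injEq, Sum.inr.injEq, and_true] at h
  obtain ⟨rfl, rfl⟩ := h
  exact hij

lemma aux_lenAbs_char (a b hsh : A) (hah : a ≠ hsh) (hbh : b ≠ hsh) :
    lenAbsC (([Sum.inr 0, Sum.inr 2], [Sum.inr 2, Sum.inr 1]) : Equation A (Fin 3))
      (![{w : List A | ∃ u, w = hsh :: u ∧ ∀ c ∈ u, c = a ∨ c = b},
         {w : List A | ∃ u, w = hsh :: u ∧ ∀ c ∈ u, c = a ∨ c = b},
         (Set.univ : Language A)])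
    = {v : Fin 3 → ℕ | v 0 = v 1 ∧ 0 < v 0 ∧ v 0 ∣ v 2} := by
  ext v
  constructor
  · rintro ⟨σ, hsol, hC, hlen⟩
    have hsol' : σ 0 ++ σ 2 = σ 2 ++ σ 1 := by
      simpa [IsSolution, applySub] using hsol
    have hC0 := hC 0
    have hC1 := hC 1
    change ∃ u, σ 0 = hsh :: u ∧ ∀ c ∈ u, c = a ∨ c = b at hC0
    change ∃ u, σ 1 = hsh :: u ∧ ∀ c ∈ u, c = a ∨ c = b at hC1
    obtain ⟨u, hu, hgood⟩ := hC0
    obtain ⟨u', hu', hgood'⟩ := hC1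
    have hnm : hsh ∉ u := by
      intro hm
      rcases hgood hsh hm with h | h
      · exact hah h.symm
      · exact hbh h.symm
    have hnm' : hsh ∉ u' := by
      intro hm
      rcases hgood' hsh hm with h | h
      · exact hah h.symm
      · exact hbh h.symm
    have hlens := congrArg List.length hsol'
    simp only [List.length_append] at hlens
    refine ⟨?_, ?_, ?_⟩
    · rw [← hlen 0, ← hlen 1]; omega
    · rw [← hlen 0, hu]; simp
    · have := aux_conj_dvd hsh (σ 2).length (σ 2) (σ 0) (σ 1) rfl
        ⟨u, hu, hnm⟩ ⟨u', hu', hnm'⟩ hsol'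
      rwa [hlen 0, hlen 2] at this
  · rintro ⟨h01, h0, hdvd⟩
    set w : List A := hsh :: List.replicate (v 0 - 1) a with hw
    have hwlen : w.length = v 0 := by
      rw [hw]
      simp only [List.length_cons, List.length_replicate]
      omega
    refine ⟨![w, w, listPow w (v 2 / v 0)], ?_, ?_, ?_⟩
    · show applySub _ _ = applySub _ _
      simp only [applySub, List.flatMap_cons, List.flatMap_nil, List.append_nil,
        Matrix.cons_val_zero, Matrix.cons_val_one, Matrix.head_cons,
        Matrix.cons_val_two, Matrix.tail_cons]
      exact listPow_comm w _
    · intro x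
      fin_cases x
      · exact ⟨List.replicate (v 0 - 1) a, rfl,
          fun c hc => Or.inl (List.eq_of_mem_replicate hc)⟩
      · exact ⟨List.replicate (v 0 - 1) a, rfl,
          fun c hc => Or.inl (List.eq_of_mem_replicate hc)⟩
      · exact Set.mem_univ _
    · intro x
      fin_cases x
      · show w.length = v 0
        exact hwlen
      · show w.length = v 1
        exact hwlen.trans h01
      · show (listPow w (v 2 / v 0)).length = v 2
        rw [listPow_length, hwlen, Nat.div_mul_cancel hdvd]

end AuxMain

/-- The set `{(m, n, k) : m = n, m > 0, m ∣ k}` is not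
semilinear (hence not Presburger-definable).  Consequently, over the alphabet
`{a, b, #}` there is a regular-oriented word equation with regular constraints
(namely `x·z = z·y` with `x, y ∈ #(a+b)*`) whose length abstraction is not
Presburger-definable. -/
theorem conjugacy_lenAbs_not_semilinear
    {A : Type*} [DecidableEq A] (a b hash : A)
    (hab : a ≠ b) (hah : a ≠ hash) (hbh : b ≠ hash) :
    ¬ IsSemilinearSet' {t : ℕ × ℕ × ℕ | t.1 = t.2.1 ∧ 0 < t.1 ∧ t.1 ∣ t.2.2} ∧
    ∃ (E : Equation A (Fin 3)) (C : Fin 3 → Language A),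
      RegularOriented E ∧ (∀ i, (C i).IsRegular) ∧
        ¬ IsSemilinearSet' (lenAbsC E C) := by
  classical
  refine ⟨aux_not_semilinear, ?_⟩
  set L : Language A := {w : List A | ∃ u, w = hash :: u ∧ ∀ c ∈ u, c = a ∨ c = b} with hLdef
  refine ⟨([Sum.inr 0, Sum.inr 2], [Sum.inr 2, Sum.inr 1]),
    ![L, L, (Set.univ : Language A)], ⟨?_, ?_⟩, ?_, ?_⟩
  · -- Regular
    intro x
    constructor <;> fin_cases x <;> first | exact Nat.le_refl 1 | exact Nat.zero_le 1
  · -- Oriented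
    refine ⟨fun s t => (![0, 2, 1] : Fin 3 → ℕ) s < (![0, 2, 1] : Fin 3 → ℕ) t, ?_, ?_, ?_⟩
    · exact { trichotomous := by decide, irrefl := by decide, trans := by decide }
    · exact aux_sideOrdered _ 0 2 (by decide)
    · exact aux_sideOrdered _ 2 1 (by decide)
  · -- regular constraints
    intro i
    fin_cases i
    · exact ⟨Fin 3, inferInstance, hashDFA a b hash, hashDFA_accepts a b hash⟩
    · exact ⟨Fin 3, inferInstance, hashDFA a b hash, hashDFA_accepts a b hash⟩
    · exact ⟨Unit, inferInstance, allDFA A, allDFA_accepts⟩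
  · -- not semilinear
    intro hsem
    apply aux_not_semilinear
    let f : (Fin 3 → ℕ) →+ ℕ × ℕ × ℕ :=
      { toFun := fun v => (v 0, v 1, v 2), map_zero' := rfl, map_add' := fun _ _ => rfl }
    have himg := aux_semilinear_image f hsem
    have hchar := aux_lenAbs_char a b hash hah hbh
    rw [hLdef] at hsem himg
    have hEq : f '' lenAbsC
        (([Sum.inr 0, Sum.inr 2], [Sum.inr 2, Sum.inr 1]) : Equation A (Fin 3))
        (![{w : List A | ∃ u, w = hash :: u ∧ ∀ c ∈ u, c = a ∨ c = b},
           {w : List A | ∃ u, w = hash :: u ∧ ∀ c ∈ u, c = a ∨ c = b},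
           (Set.univ : Language A)])
        = {t : ℕ × ℕ × ℕ | t.1 = t.2.1 ∧ 0 < t.1 ∧ t.1 ∣ t.2.2} := by
      rw [hchar]
      ext t
      constructor
      · rintro ⟨v, hv, rfl⟩
        exact hv
      · rintro ⟨h1, h2, h3⟩
        refine ⟨![t.1, t.2.1, t.2.2], ⟨?_, ?_, ?_⟩, ?_⟩
        · simpa using h1
        · simpa using h2
        · simpa using h3
        · show (t.1, t.2.1, t.2.2) = t
          rfl
    rw [← hEq]
    exact himg

end WordEq
end
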